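/- Let a < b, N ≥ 1, T ≥ 1. For each 1 ≤ t ≤ T let F_{1,t}, …, F_{N,t} be distribution functions on [a,b], let p_{i,t} ∈ [0,1] be confidence levels with Σ_{j=1}^N p_{j,t} w_{j,t} > 0 at every step, and let y_t ∈ [a,b] be the outcomes. Define w_{i,1} = 1/N, normalized weights w*_{i,t} = p_{i,t} w_{i,t} / Σ_{j=1}^N p_{j,t} w_{j,t}, the learner's forecast F_t(u) = 1/2 − (1/4)·ln( (Σ_{i=1}^N w*_{i,t} e^{−2 F_{i,t}(u)²}) / (Σ_{i=1}^N w*_{i,t} e^{−2 (1 − F_{i,t}(u))²}) ) for u ∈ [a,b], and the weight update w_{i,t+1} = w_{i,t} · exp(−(2/(b−a))·(p_{i,t}·CRPS(F_{i,t}, y_t) + (1 − p_{i,t})·CRPS(F_t, y_t))). Then for every i with 1 ≤ i ≤ N: Σ_{t=1}^T p_{i,t}·(CRPS(F_t, y_t) − CRPS(F_{i,t}, y_t)) ≤ ((b−a)/2)·ln N. -/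

import Mathlib

/-- A distribution function on `[a,b]`: nondecreasing on `[a,b]` with `F a = 0`, `F b = 1`. -/
def DistFunc (a b : ℝ) (F : ℝ → ℝ) : Prop :=
  MonotoneOn F (Set.Icc a b) ∧ F a = 0 ∧ F b = 1

/-- The continuous ranked probability score
`CRPS(F, y) = ∫_a^b (F u - H(u - y))^2 du`, where `H` is the Heaviside function
(`H(u - y) = 1` iff `u ≥ y`). -/
noncomputable def CRPS (a b : ℝ) (F : ℝ → ℝ) (y : ℝ) : ℝ :=
  ∫ u in a..b, (F u - (if y ≤ u then (1 : ℝ) else 0)) ^ 2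

open Real Set MeasureTheory

noncomputable def Lfn (x : ℝ) : ℝ := Real.sqrt (-Real.log x / 2)
noncomputable def cfn (x : ℝ) : ℝ := x * Real.exp (4 * Lfn x - 2)

lemma Lfn_pos_lt {x : ℝ} (hx : x ∈ Ioo (Real.exp (-2)) 1) :
    0 < x ∧ -2 < Real.log x ∧ Real.log x < 0 ∧ 0 < Lfn x ∧ Lfn x < 1 := by
  obtain ⟨h1, h2⟩ := hx
  have hx0 : 0 < x := lt_trans (Real.exp_pos _) h1
  have hl1 : -2 < Real.log x := by
    have := Real.log_lt_log (Real.exp_pos _) h1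
    rwa [Real.log_exp] at this
  have hl2 : Real.log x < 0 := Real.log_neg hx0 h2
  have hL : 0 < Lfn x := Real.sqrt_pos.2 (by linarith)
  have hL1 : Lfn x < 1 := by
    rw [Lfn, show (1:ℝ) = Real.sqrt 1 by simp]
    exact Real.sqrt_lt_sqrt (by linarith) (by linarith)
  exact ⟨hx0, hl1, hl2, hL, hL1⟩

lemma hasDerivAt_Lfn {x : ℝ} (hx : x ∈ Ioo (Real.exp (-2)) 1) :
    HasDerivAt Lfn (-(1 / (4 * x * Lfn x))) x := by
  obtain ⟨hx0, hl1, hl2, hL, hL1⟩ := Lfn_pos_lt hx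
  have h1 : HasDerivAt (fun x => -Real.log x / 2) (-x⁻¹ / 2) x :=
    ((Real.hasDerivAt_log hx0.ne').neg).div_const 2
  have h2 : HasDerivAt Real.sqrt (1 / (2 * Real.sqrt (-Real.log x / 2))) (-Real.log x / 2) :=
    Real.hasDerivAt_sqrt (ne_of_gt (by linarith))
  have := h2.comp x h1
  refine this.congr_deriv ?_
  have hs : Real.sqrt (-Real.log x / 2) = Lfn x := rfl
  rw [hs]
  field_simp
  ring

lemma hasDerivAt_cfn {x : ℝ} (hx : x ∈ Ioo (Real.exp (-2)) 1) :
    HasDerivAt cfn (Real.exp (4 * Lfn x - 2) * (1 - 1 / Lfn x)) x := by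
  obtain ⟨hx0, hl1, hl2, hL, hL1⟩ := Lfn_pos_lt hx
  have h1 : HasDerivAt (fun x => 4 * Lfn x - 2) (4 * -(1 / (4 * x * Lfn x))) x :=
    ((hasDerivAt_Lfn hx).const_mul 4).sub_const 2
  have h2 : HasDerivAt (fun x => Real.exp (4 * Lfn x - 2))
      (Real.exp (4 * Lfn x - 2) * (4 * -(1 / (4 * x * Lfn x)))) x := h1.exp
  have h3 : HasDerivAt cfn
      (1 * Real.exp (4 * Lfn x - 2) + x * (Real.exp (4 * Lfn x - 2) * (4 * -(1 / (4 * x * Lfn x))))) x :=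
    (hasDerivAt_id x).mul h2
  convert h3 using 1
  field_simp
  ring

lemma concave_cfn : ConcaveOn ℝ (Icc (Real.exp (-2)) 1) cfn := by
  have hint : interior (Icc (Real.exp (-2)) 1) = Ioo (Real.exp (-2)) 1 := interior_Icc
  apply concaveOn_of_hasDerivWithinAt2_nonpos (f' := fun x => Real.exp (4 * Lfn x - 2) * (1 - 1 / Lfn x))
    (f'' := fun x => Real.exp (4 * Lfn x - 2) * (-(1 / (4 * x * Lfn x))) * (4 - 4 / Lfn x + 1 / (Lfn x) ^ 2))
    (convex_Icc _ _)
  · -- continuity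
    apply ContinuousOn.mul continuousOn_id
    apply Real.continuous_exp.comp_continuousOn
    apply ContinuousOn.sub ?_ continuousOn_const
    apply ContinuousOn.mul continuousOn_const
    apply Real.continuous_sqrt.comp_continuousOn
    apply ContinuousOn.div_const
    apply ContinuousOn.neg
    apply Real.continuousOn_log.mono
    intro x hx
    have : 0 < x := lt_of_lt_of_le (Real.exp_pos _) hx.1
    simp [this.ne']
  · rw [hint]
    intro x hx
    exact (hasDerivAt_cfn hx).hasDerivWithinAt
  · rw [hint]
    intro x hx
    obtain ⟨hx0, hl1, hl2, hL, hL1⟩ := Lfn_pos_lt hx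
    have h1 : HasDerivAt (fun x => 4 * Lfn x - 2) (4 * -(1 / (4 * x * Lfn x))) x :=
      ((hasDerivAt_Lfn hx).const_mul 4).sub_const 2
    have h2 : HasDerivAt (fun x => Real.exp (4 * Lfn x - 2))
        (Real.exp (4 * Lfn x - 2) * (4 * -(1 / (4 * x * Lfn x)))) x := h1.exp
    have h4 : HasDerivAt (fun x => 1 - 1 / Lfn x) (-(-(1 / (4 * x * Lfn x)) / (Lfn x) ^ 2) * -1)  x := by
      have : HasDerivAt (fun x => 1 / Lfn x) (-(-(1 / (4 * x * Lfn x)) / (Lfn x) ^ 2)) x := by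
        have := (hasDerivAt_Lfn hx).inv hL.ne'
        refine (this.congr_deriv ?_).congr_of_eventuallyEq (Filter.Eventually.of_forall fun y => by simp [one_div])
        field_simp
      refine (this.const_sub 1).congr_deriv ?_
      ring
    have h5 := h2.mul h4
    apply HasDerivAt.hasDerivWithinAt
    refine h5.congr_deriv ?_
    field_simp
    ring
  · rw [hint]
    intro x hx
    obtain ⟨hx0, hl1, hl2, hL, hL1⟩ := Lfn_pos_lt hx
    have he : 0 < Real.exp (4 * Lfn x - 2) := Real.exp_pos _
    have hk : 0 ≤ 4 - 4 / Lfn x + 1 / (Lfn x) ^ 2 := by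
      have : 4 - 4 / Lfn x + 1 / (Lfn x) ^ 2 = (2 - 1 / Lfn x) ^ 2 := by
        field_simp; ring
      rw [this]; positivity
    have hneg : -(1 / (4 * x * Lfn x)) ≤ 0 := by
      have : 0 < 4 * x * Lfn x := by positivity
      simp only [neg_nonpos]
      positivity
    have h6 : Real.exp (4 * Lfn x - 2) * (-(1 / (4 * x * Lfn x))) ≤ 0 :=
      mul_nonpos_of_nonneg_of_nonpos he.le hneg
    exact mul_nonpos_of_nonpos_of_nonneg h6 hk

lemma cfn_exp {f : ℝ} (hf0 : 0 ≤ f) :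
    cfn (Real.exp (-2 * f ^ 2)) = Real.exp (-2 * (1 - f) ^ 2) := by
  have h : Lfn (Real.exp (-2 * f ^ 2)) = f := by
    rw [Lfn, Real.log_exp, show -(-2 * f ^ 2) / 2 = f ^ 2 by ring]
    exact Real.sqrt_sq hf0
  rw [cfn, h, ← Real.exp_add]
  ring_nf

lemma exp_mem_Icc {f : ℝ} (hf : f ∈ Icc (0:ℝ) 1) :
    Real.exp (-2 * f ^ 2) ∈ Icc (Real.exp (-2)) 1 := by
  constructor
  · apply Real.exp_le_exp.2; nlinarith [hf.1, hf.2]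
  · rw [show (1:ℝ) = Real.exp 0 by simp]
    apply Real.exp_le_exp.2; nlinarith [hf.1]

section
variable {N : ℕ} (q f : Fin N → ℝ)

lemma sum_bounds (hq0 : ∀ i, 0 ≤ q i) (hq1 : ∑ i, q i = 1)
    (hf : ∀ i, f i ∈ Icc (0:ℝ) 1) :
    (∑ i, q i * Real.exp (-2 * f i ^ 2)) ∈ Icc (Real.exp (-2)) 1 := by
  constructor
  · calc Real.exp (-2) = ∑ i, q i * Real.exp (-2) := by
          rw [← Finset.sum_mul, hq1, one_mul]
    _ ≤ _ := Finset.sum_le_sum fun i _ =>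
          mul_le_mul_of_nonneg_left (exp_mem_Icc (hf i)).1 (hq0 i)
  · calc (∑ i, q i * Real.exp (-2 * f i ^ 2)) ≤ ∑ i, q i * 1 :=
          Finset.sum_le_sum fun i _ =>
            mul_le_mul_of_nonneg_left (exp_mem_Icc (hf i)).2 (hq0 i)
    _ = 1 := by rw [← Finset.sum_mul, hq1, one_mul]

lemma jensen_dir (hq0 : ∀ i, 0 ≤ q i) (hq1 : ∑ i, q i = 1)
    (hf : ∀ i, f i ∈ Icc (0:ℝ) 1) :
    Real.log (∑ i, q i * Real.exp (-2 * (1 - f i) ^ 2)) ≤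
      -2 * (1 - Lfn (∑ i, q i * Real.exp (-2 * f i ^ 2))) ^ 2 := by
  set A := ∑ i, q i * Real.exp (-2 * f i ^ 2) with hA
  have hAmem : A ∈ Icc (Real.exp (-2)) 1 := sum_bounds q f hq0 hq1 hf
  have hApos : 0 < A := lt_of_lt_of_le (Real.exp_pos _) hAmem.1
  have hjen : (∑ i, q i * Real.exp (-2 * (1 - f i) ^ 2)) ≤ cfn A := by
    have := concave_cfn.le_map_sum (t := Finset.univ) (w := q)
      (p := fun i => Real.exp (-2 * f i ^ 2)) (fun i _ => hq0 i) hq1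
      (fun i _ => exp_mem_Icc (hf i))
    simp only [smul_eq_mul] at this
    calc (∑ i, q i * Real.exp (-2 * (1 - f i) ^ 2))
        = ∑ i, q i * cfn (Real.exp (-2 * f i ^ 2)) := by
          refine Finset.sum_congr rfl fun i _ => ?_
          rw [cfn_exp (hf i).1]
    _ ≤ cfn A := this
  have hgA : Lfn A ^ 2 = -Real.log A / 2 := by
    rw [Lfn]
    exact Real.sq_sqrt (by
      have : Real.log A ≤ 0 := Real.log_nonpos hApos.le hAmem.2
      linarith)
  have hcfnA : cfn A = Real.exp (-2 * (1 - Lfn A) ^ 2) := by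
    rw [cfn]
    nth_rewrite 1 [← Real.exp_log hApos]
    rw [← Real.exp_add]
    congr 1
    nlinarith [hgA]
  calc Real.log (∑ i, q i * Real.exp (-2 * (1 - f i) ^ 2))
      ≤ Real.log (cfn A) := by
        apply Real.log_le_log ?_ hjen
        have hBmem := sum_bounds q (fun i => 1 - f i) hq0 hq1
          (fun i => ⟨by linarith [(hf i).2], by linarith [(hf i).1]⟩)
        exact lt_of_lt_of_le (Real.exp_pos _) hBmem.1
  _ = -2 * (1 - Lfn A) ^ 2 := by rw [hcfnA, Real.log_exp]

end

set_option maxHeartbeats 1000000 in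
lemma pointwise_mix {N : ℕ} (q f : Fin N → ℝ) (hq0 : ∀ i, 0 ≤ q i) (hq1 : ∑ i, q i = 1)
    (hf : ∀ i, f i ∈ Icc (0:ℝ) 1) :
    Real.log (∑ i, q i * Real.exp (-2 * f i ^ 2)) ≤
      -2 * (1 / 2 - (1 / 4) * Real.log ((∑ i, q i * Real.exp (-2 * f i ^ 2)) /
        (∑ i, q i * Real.exp (-2 * (1 - f i) ^ 2)))) ^ 2 ∧
    Real.log (∑ i, q i * Real.exp (-2 * (1 - f i) ^ 2)) ≤
      -2 * (1 - (1 / 2 - (1 / 4) * Real.log ((∑ i, q i * Real.exp (-2 * f i ^ 2)) /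
        (∑ i, q i * Real.exp (-2 * (1 - f i) ^ 2))))) ^ 2 := by
  set A := ∑ i, q i * Real.exp (-2 * f i ^ 2) with hAdef
  set B := ∑ i, q i * Real.exp (-2 * (1 - f i) ^ 2) with hBdef
  have hf' : ∀ i, (fun i => 1 - f i) i ∈ Icc (0:ℝ) 1 :=
    fun i => ⟨by simp only []; linarith [(hf i).2], by simp only []; linarith [(hf i).1]⟩
  have hAmem : A ∈ Icc (Real.exp (-2)) 1 := sum_bounds q f hq0 hq1 hf
  have hBmem : B ∈ Icc (Real.exp (-2)) 1 := sum_bounds q (fun i => 1 - f i) hq0 hq1 hf'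
  have hApos : 0 < A := lt_of_lt_of_le (Real.exp_pos _) hAmem.1
  have hBpos : 0 < B := lt_of_lt_of_le (Real.exp_pos _) hBmem.1
  have hAlog : -2 ≤ Real.log A ∧ Real.log A ≤ 0 := by
    constructor
    · calc (-2:ℝ) = Real.log (Real.exp (-2)) := (Real.log_exp _).symm
      _ ≤ Real.log A := Real.log_le_log (Real.exp_pos _) hAmem.1
    · exact Real.log_nonpos hApos.le hAmem.2
  have hBlog : -2 ≤ Real.log B ∧ Real.log B ≤ 0 := by
    constructor
    · calc (-2:ℝ) = Real.log (Real.exp (-2)) := (Real.log_exp _).symm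
      _ ≤ Real.log B := Real.log_le_log (Real.exp_pos _) hBmem.1
    · exact Real.log_nonpos hBpos.le hBmem.2
  set gA := Lfn A with hgAdef
  set gB := Lfn B with hgBdef
  have hgA : gA ^ 2 = -Real.log A / 2 := Real.sq_sqrt (by linarith [hAlog.2])
  have hgB : gB ^ 2 = -Real.log B / 2 := Real.sq_sqrt (by linarith [hBlog.2])
  have hgA0 : 0 ≤ gA := Real.sqrt_nonneg _
  have hgB0 : 0 ≤ gB := Real.sqrt_nonneg _
  have hd1 : Real.log B ≤ -2 * (1 - gA) ^ 2 := jensen_dir q f hq0 hq1 hf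
  have hd2 : Real.log A ≤ -2 * (1 - gB) ^ 2 := by
    have := jensen_dir q (fun i => 1 - f i) hq0 hq1 hf'
    simp only [sub_sub_cancel] at this
    exact this
  have hlogdiv : Real.log (A / B) = Real.log A - Real.log B :=
    Real.log_div hApos.ne' hBpos.ne'
  rw [hlogdiv]
  clear_value gB gA B A
  clear hgAdef hgBdef hAdef hBdef hAmem hBmem hf hf' hq0 hq1
  have hgA1 : gA ≤ 1 := by nlinarith [hAlog.1]
  have hgB1 : gB ≤ 1 := by nlinarith [hBlog.1]
  have e1 : gB ^ 2 - (1 - gA) ^ 2 ≥ 0 := by nlinarith [hd1, hgB]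
  have e2 : gA ^ 2 - (1 - gB) ^ 2 ≥ 0 := by nlinarith [hd2, hgA]
  have hLA : Real.log A = -2 * gA ^ 2 := by linarith [hgA]
  have hLB : Real.log B = -2 * gB ^ 2 := by linarith [hgB]
  rw [hLA, hLB]
  have hGle : 1/2 + (gA^2 - gB^2)/2 ≤ gA := by nlinarith [e1]
  have hGge : (0:ℝ) ≤ 1/2 + (gA^2 - gB^2)/2 := by nlinarith [hgB1, hgB0]
  have hGle' : 1/2 + (gB^2 - gA^2)/2 ≤ gB := by nlinarith [e2]
  have hGge' : (0:ℝ) ≤ 1/2 + (gB^2 - gA^2)/2 := by nlinarith [hgA1, hgA0]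
  constructor
  · nlinarith [mul_le_mul hGle hGle hGge hgA0]
  · nlinarith [mul_le_mul hGle' hGle' hGge' hgB0]

lemma exp_jensen_sum {N : ℕ} (r z : Fin N → ℝ) (hr0 : ∀ i, 0 ≤ r i) (hr1 : ∑ i, r i = 1) :
    Real.exp (∑ i, r i * z i) ≤ ∑ i, r i * Real.exp (z i) := by
  have := convexOn_exp.map_sum_le (t := Finset.univ) (w := r) (p := z)
    (fun i _ => hr0 i) hr1 (fun i _ => Set.mem_univ _)
  simpa [smul_eq_mul] using this

lemma integrableOn_of_bounded {g : ℝ → ℝ} {a b C : ℝ} (hm : Measurable g)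
    (hb : ∀ u, |g u| ≤ C) : IntegrableOn g (Set.Ioc a b) := by
  have : IntegrableOn (fun _ : ℝ => C) (Set.Ioc a b) :=
    integrableOn_const measure_Ioc_lt_top.ne
  exact this.mono' hm.aestronglyMeasurable.restrict (Filter.Eventually.of_forall hb)

theorem mixability_CRPS (a b : ℝ) (hab : a < b) {N : ℕ} (q : Fin N → ℝ)
    (hq0 : ∀ i, 0 ≤ q i) (hq1 : ∑ i, q i = 1)
    (f : Fin N → ℝ → ℝ) (hfm : ∀ i, Measurable (f i))
    (hfb : ∀ i u, f i u ∈ Icc (0:ℝ) 1)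
    (y : ℝ) (Gh : ℝ → ℝ)
    (hGh : ∀ u ∈ Icc a b, Gh u = 1 / 2 - (1 / 4) * Real.log
      ((∑ i, q i * Real.exp (-2 * (f i u) ^ 2)) /
        (∑ i, q i * Real.exp (-2 * (1 - f i u) ^ 2)))) :
    CRPS a b Gh y ≤ -((b - a) / 2) *
      Real.log (∑ i, q i * Real.exp (-(2 / (b - a)) * CRPS a b (f i) y)) := by
  have hba : 0 < b - a := by linarith
  set χ : ℝ → ℝ := fun u => if y ≤ u then (1 : ℝ) else 0 with hχdef
  have hχm : Measurable χ := by
    apply Measurable.ite ?_ measurable_const measurable_const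
    exact measurableSet_Ici
  have hχb : ∀ u, χ u ∈ Icc (0:ℝ) 1 := by
    intro u; rw [hχdef]; dsimp only; split <;> norm_num
  set ℓ : Fin N → ℝ → ℝ := fun i u => (f i u - χ u) ^ 2 with hℓdef
  have hℓm : ∀ i, Measurable (ℓ i) := fun i => ((hfm i).sub hχm).pow_const 2
  have hℓb : ∀ i u, ℓ i u ∈ Icc (0:ℝ) 1 := by
    intro i u
    constructor
    · positivity
    · have h1 := hfb i u; have h2 := hχb u
      rw [hℓdef]; dsimp only
      nlinarith [h1.1, h1.2, h2.1, h2.2]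
  set S : ℝ → ℝ := fun u => ∑ i, q i * Real.exp (-2 * ℓ i u) with hSdef
  have hSm : Measurable S := by
    apply Finset.measurable_sum
    intro i _
    exact (((hℓm i).const_mul (-2)).exp).const_mul (q i)
  have hSb : ∀ u, S u ∈ Icc (Real.exp (-2)) 1 := by
    intro u
    have := sum_bounds q (fun i => Real.sqrt (ℓ i u)) hq0 hq1
      (fun i => ⟨Real.sqrt_nonneg _, Real.sqrt_le_one.2 (hℓb i u).2⟩)
    have heq : ∀ i, Real.sqrt (ℓ i u) ^ 2 = ℓ i u := fun i => Real.sq_sqrt (hℓb i u).1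
    simpa only [heq] using this
  have hSpos : ∀ u, 0 < S u := fun u => lt_of_lt_of_le (Real.exp_pos _) (hSb u).1
  -- the formula-defined forecast
  set Ghat : ℝ → ℝ := fun u => 1 / 2 - (1 / 4) * Real.log
      ((∑ i, q i * Real.exp (-2 * (f i u) ^ 2)) /
        (∑ i, q i * Real.exp (-2 * (1 - f i u) ^ 2))) with hGhatdef
  have hAm : Measurable (fun u => ∑ i, q i * Real.exp (-2 * (f i u) ^ 2)) := by
    apply Finset.measurable_sum
    intro i _
    exact ((((hfm i).pow_const 2).const_mul (-2)).exp).const_mul (q i)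
  have hBm : Measurable (fun u => ∑ i, q i * Real.exp (-2 * (1 - f i u) ^ 2)) := by
    apply Finset.measurable_sum
    intro i _
    exact (((((hfm i).const_sub 1).pow_const 2).const_mul (-2)).exp).const_mul (q i)
  have hGhatm : Measurable Ghat := by
    apply Measurable.const_sub
    exact (Real.measurable_log.comp (hAm.div hBm)).const_mul _
  have hlogmem : ∀ x : ℝ, x ∈ Icc (Real.exp (-2)) 1 → Real.log x ∈ Icc (-2:ℝ) 0 := by
    intro x hx
    have hxpos : 0 < x := lt_of_lt_of_le (Real.exp_pos _) hx.1
    constructor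
    · calc (-2:ℝ) = Real.log (Real.exp (-2)) := (Real.log_exp _).symm
        _ ≤ Real.log x := Real.log_le_log (Real.exp_pos _) hx.1
    · exact Real.log_nonpos hxpos.le hx.2
  have hABmem : ∀ u, (∑ i, q i * Real.exp (-2 * (f i u) ^ 2)) ∈ Icc (Real.exp (-2)) 1 ∧
      (∑ i, q i * Real.exp (-2 * (1 - f i u) ^ 2)) ∈ Icc (Real.exp (-2)) 1 := by
    intro u
    refine ⟨sum_bounds q (fun i => f i u) hq0 hq1 (fun i => hfb i u), ?_⟩
    have := sum_bounds q (fun i => 1 - f i u) hq0 hq1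
      (fun i => ⟨by linarith [(hfb i u).2], by linarith [(hfb i u).1]⟩)
    exact this
  have hGhatb : ∀ u, Ghat u ∈ Icc (0:ℝ) 1 := by
    intro u
    obtain ⟨hA, hB⟩ := hABmem u
    have hApos : (0:ℝ) < ∑ i, q i * Real.exp (-2 * (f i u) ^ 2) :=
      lt_of_lt_of_le (Real.exp_pos _) hA.1
    have hBpos : (0:ℝ) < ∑ i, q i * Real.exp (-2 * (1 - f i u) ^ 2) :=
      lt_of_lt_of_le (Real.exp_pos _) hB.1
    have hlA := hlogmem _ hA
    have hlB := hlogmem _ hB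
    have hdiv : Real.log ((∑ i, q i * Real.exp (-2 * (f i u) ^ 2)) /
        (∑ i, q i * Real.exp (-2 * (1 - f i u) ^ 2))) =
        Real.log (∑ i, q i * Real.exp (-2 * (f i u) ^ 2)) -
        Real.log (∑ i, q i * Real.exp (-2 * (1 - f i u) ^ 2)) :=
      Real.log_div hApos.ne' hBpos.ne'
    rw [hGhatdef]
    dsimp only
    rw [hdiv]
    constructor
    · linarith [hlA.1, hlA.2, hlB.1, hlB.2]
    · linarith [hlA.1, hlA.2, hlB.1, hlB.2]
  -- pointwise mixability
  have hpoint : ∀ u, (Ghat u - χ u) ^ 2 ≤ -(1/2) * Real.log (S u) := by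
    intro u
    have hmix := pointwise_mix q (fun i => f i u) hq0 hq1 (fun i => hfb i u)
    by_cases hcase : y ≤ u
    · have hχu : χ u = 1 := by rw [hχdef]; simp [hcase]
      have hSu : S u = ∑ i, q i * Real.exp (-2 * (1 - f i u) ^ 2) := by
        rw [hSdef]
        refine Finset.sum_congr rfl fun i _ => ?_
        rw [hℓdef]
        dsimp only
        rw [hχu, show (f i u - 1) ^ 2 = (1 - f i u) ^ 2 by ring]
      rw [hχu, hSu]
      have h2 := hmix.2
      rw [hGhatdef]
      dsimp only
      nlinarith [h2]
    · have hχu : χ u = 0 := by rw [hχdef]; simp [hcase]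
      have hSu : S u = ∑ i, q i * Real.exp (-2 * (f i u) ^ 2) := by
        rw [hSdef]
        refine Finset.sum_congr rfl fun i _ => ?_
        rw [hℓdef]
        dsimp only
        rw [hχu, sub_zero]
      rw [hχu, hSu]
      have h1 := hmix.1
      rw [hGhatdef]
      dsimp only
      nlinarith [h1]
  -- integrability
  have hi1 : IntegrableOn (fun u => (Ghat u - χ u) ^ 2) (Set.Ioc a b) := by
    apply integrableOn_of_bounded (C := 1) ((hGhatm.sub hχm).pow_const 2)
    intro u
    rw [abs_of_nonneg (by positivity)]
    change (Ghat u - χ u) ^ 2 ≤ 1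
    nlinarith [(hGhatb u).1, (hGhatb u).2, (hχb u).1, (hχb u).2]
  have hi2 : IntegrableOn (fun u => Real.log (S u)) (Set.Ioc a b) := by
    apply integrableOn_of_bounded (g := fun u => Real.log (S u)) (C := 2) hSm.log
    intro u
    have := hlogmem _ (hSb u)
    rw [abs_le]
    exact ⟨this.1, by linarith [this.2]⟩
  have hi3 : ∀ i, IntegrableOn (ℓ i) (Set.Ioc a b) := by
    intro i
    apply integrableOn_of_bounded (C := 1) (hℓm i)
    intro u
    rw [abs_of_nonneg (hℓb i u).1]
    exact (hℓb i u).2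
  -- rewrite CRPS values
  have hCG : CRPS a b Gh y = ∫ u in Set.Ioc a b, (Ghat u - χ u) ^ 2 := by
    rw [CRPS, intervalIntegral.integral_of_le hab.le]
    apply setIntegral_congr_fun measurableSet_Ioc
    intro u hu
    have h := hGh u (Ioc_subset_Icc_self hu)
    dsimp only
    rw [h]
  have hCf : ∀ i, CRPS a b (f i) y = ∫ u in Set.Ioc a b, ℓ i u := by
    intro i
    rw [CRPS, intervalIntegral.integral_of_le hab.le]
  -- monotone integral step
  have hstep1 : (∫ u in Set.Ioc a b, (Ghat u - χ u) ^ 2) ≤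
      ∫ u in Set.Ioc a b, -(1/2) * Real.log (S u) := by
    apply setIntegral_mono_on hi1 (hi2.const_mul _) measurableSet_Ioc
    intro u _
    exact hpoint u
  -- constants
  set C : Fin N → ℝ := fun i => ∫ u in Set.Ioc a b, ℓ i u with hCdef
  have hC0 : ∀ i, 0 ≤ C i := fun i =>
    setIntegral_nonneg measurableSet_Ioc (fun u _ => (hℓb i u).1)
  have hIoc : (volume (Set.Ioc a b)).toReal = b - a := by
    rw [Real.volume_Ioc, ENNReal.toReal_ofReal hba.le]
  have hconst : ∀ (c : ℝ), (∫ _ in Set.Ioc a b, c) = (b - a) * c := by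
    intro c
    rw [setIntegral_const, measureReal_def, hIoc, smul_eq_mul]
  have hC1 : ∀ i, C i ≤ b - a := by
    intro i
    calc C i ≤ ∫ _ in Set.Ioc a b, (1:ℝ) :=
          setIntegral_mono_on (hi3 i) (integrableOn_const measure_Ioc_lt_top.ne)
            measurableSet_Ioc (fun u _ => (hℓb i u).2)
    _ = b - a := by rw [hconst]; ring
  set E : Fin N → ℝ := fun i => Real.exp (-(2 / (b - a)) * C i) with hEdef
  have h2pos : 0 < 2 / (b - a) := by positivity
  have hk : 2 / (b - a) * (b - a) = 2 := div_mul_cancel₀ 2 hba.ne'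
  have hEb : ∀ i, Real.exp (-2) ≤ E i ∧ E i ≤ 1 := by
    intro i
    constructor
    · apply Real.exp_le_exp.2
      nlinarith [mul_le_mul_of_nonneg_left (hC1 i) h2pos.le]
    · rw [show (1:ℝ) = Real.exp 0 by simp]
      apply Real.exp_le_exp.2
      nlinarith [mul_nonneg h2pos.le (hC0 i)]
  set D := ∑ i, q i * E i with hDdef
  have hDlb : Real.exp (-2) ≤ D := by
    calc Real.exp (-2) = ∑ i, q i * Real.exp (-2) := by rw [← Finset.sum_mul, hq1, one_mul]
    _ ≤ D := Finset.sum_le_sum fun i _ => mul_le_mul_of_nonneg_left (hEb i).1 (hq0 i)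
  have hDpos : 0 < D := lt_of_lt_of_le (Real.exp_pos _) hDlb
  set r : Fin N → ℝ := fun i => q i * E i / D with hrdef
  have hr0 : ∀ i, 0 ≤ r i := fun i =>
    div_nonneg (mul_nonneg (hq0 i) (Real.exp_pos _).le) hDpos.le
  have hr1 : ∑ i, r i = 1 := by
    rw [hrdef]
    dsimp only
    rw [← Finset.sum_div, ← hDdef, div_self hDpos.ne']
  set K : ℝ := Real.log D + ∑ i, (2 * r i) * (C i / (b - a)) with hKdef
  have hsupport : ∀ u, K + ∑ i, (-2 * r i) * ℓ i u ≤ Real.log (S u) := by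
    intro u
    have hz := exp_jensen_sum r (fun i => -2 * (ℓ i u - C i / (b - a))) hr0 hr1
    have hterm : ∀ i, r i * Real.exp (-2 * (ℓ i u - C i / (b - a))) =
        q i * Real.exp (-2 * ℓ i u) / D := by
      intro i
      rw [hrdef, hEdef]
      dsimp only
      rw [div_mul_eq_mul_div, mul_assoc, ← Real.exp_add]
      congr 3
      field_simp
      ring
    have hsum : (∑ i, r i * Real.exp (-2 * (ℓ i u - C i / (b - a)))) = S u / D := by
      rw [Finset.sum_congr rfl (fun i _ => hterm i), hSdef]
      dsimp only
      rw [Finset.sum_div]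
    rw [hsum] at hz
    have hlog : (∑ i, r i * (-2 * (ℓ i u - C i / (b - a)))) ≤ Real.log (S u / D) :=
      (Real.le_log_iff_exp_le (div_pos (hSpos u) hDpos)).2 hz
    rw [Real.log_div (hSpos u).ne' hDpos.ne'] at hlog
    have hsplit : (∑ i, r i * (-2 * (ℓ i u - C i / (b - a)))) =
        (∑ i, (-2 * r i) * ℓ i u) + ∑ i, (2 * r i) * (C i / (b - a)) := by
      rw [← Finset.sum_add_distrib]
      exact Finset.sum_congr rfl fun i _ => by ring
    rw [hsplit] at hlog
    rw [hKdef]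
    linarith
  have hiL : IntegrableOn (fun u => K + ∑ i, (-2 * r i) * ℓ i u) (Set.Ioc a b) := by
    apply Integrable.add (integrableOn_const measure_Ioc_lt_top.ne)
    exact integrable_finset_sum _ fun i _ => (hi3 i).const_mul _
  have hintLHS : (∫ u in Set.Ioc a b, (K + ∑ i, (-2 * r i) * ℓ i u)) =
      (b - a) * K + ∑ i, (-2 * r i) * C i := by
    rw [integral_add (integrableOn_const (C := K) measure_Ioc_lt_top.ne)
      (integrable_finset_sum _ fun i _ => (hi3 i).const_mul _)]
    rw [hconst, integral_finset_sum _ fun i _ => (hi3 i).const_mul _]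
    congr 1
    exact Finset.sum_congr rfl fun i _ => integral_const_mul _ _
  have hlow : (b - a) * K + ∑ i, (-2 * r i) * C i ≤ ∫ u in Set.Ioc a b, Real.log (S u) := by
    rw [← hintLHS]
    exact setIntegral_mono_on hiL hi2 measurableSet_Ioc fun u _ => hsupport u
  have hcancel : (b - a) * K + ∑ i, (-2 * r i) * C i = (b - a) * Real.log D := by
    rw [hKdef, mul_add, Finset.mul_sum, add_assoc, ← Finset.sum_add_distrib]
    have hz : ∀ i ∈ Finset.univ, (b - a) * ((2 * r i) * (C i / (b - a))) + (-2 * r i) * C i = 0 := by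
      intro i _
      field_simp
      ring
    rw [Finset.sum_congr rfl hz, Finset.sum_const, smul_zero, add_zero]
  have hDeq : D = ∑ i, q i * Real.exp (-(2 / (b - a)) * CRPS a b (f i) y) := by
    rw [hDdef]
    exact Finset.sum_congr rfl fun i _ => by rw [hEdef]; dsimp only; rw [hCf i]
  calc CRPS a b Gh y = ∫ u in Set.Ioc a b, (Ghat u - χ u) ^ 2 := hCG
  _ ≤ ∫ u in Set.Ioc a b, -(1/2) * Real.log (S u) := hstep1
  _ = -(1/2) * ∫ u in Set.Ioc a b, Real.log (S u) := integral_const_mul _ _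
  _ ≤ -(1/2) * ((b - a) * Real.log D) := by
      have := hcancel ▸ hlow
      linarith
  _ = -((b - a) / 2) * Real.log (∑ i, q i * Real.exp (-(2 / (b - a)) * CRPS a b (f i) y)) := by
      rw [← hDeq]
      ring



noncomputable def clampF (a b : ℝ) (F : ℝ → ℝ) : ℝ → ℝ := fun u => F (max a (min b u))

lemma clampF_monotone {a b : ℝ} {F : ℝ → ℝ} (hab : a ≤ b) (hF : DistFunc a b F) :
    Monotone (clampF a b F) := by
  intro u v huv
  have hmem : ∀ x : ℝ, max a (min b x) ∈ Icc a b := fun x =>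
    ⟨le_max_left _ _, max_le hab (min_le_left _ _)⟩
  exact hF.1 (hmem u) (hmem v) (max_le_max le_rfl (min_le_min le_rfl huv))

lemma clampF_mem {a b : ℝ} {F : ℝ → ℝ} (hab : a ≤ b) (hF : DistFunc a b F) (u : ℝ) :
    clampF a b F u ∈ Icc (0:ℝ) 1 := by
  have hmem : max a (min b u) ∈ Icc a b := ⟨le_max_left _ _, max_le hab (min_le_left _ _)⟩
  have hmema : a ∈ Icc a b := ⟨le_rfl, hab⟩
  have hmemb : b ∈ Icc a b := ⟨hab, le_rfl⟩
  constructor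
  · rw [← hF.2.1]; exact hF.1 hmema hmem hmem.1
  · rw [← hF.2.2]; exact hF.1 hmem hmemb hmem.2

lemma clampF_eq {a b : ℝ} {F : ℝ → ℝ} (u : ℝ) (hu : u ∈ Icc a b) :
    clampF a b F u = F u := by
  rw [clampF, min_eq_right hu.2, max_eq_right hu.1]

lemma CRPS_congr {a b : ℝ} (hab : a ≤ b) {F G : ℝ → ℝ}
    (h : ∀ u ∈ Icc a b, F u = G u) (y : ℝ) : CRPS a b F y = CRPS a b G y := by
  rw [CRPS, CRPS]
  apply intervalIntegral.integral_congr
  intro u hu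
  rw [Set.uIcc_of_le hab] at hu
  dsimp only
  rw [h u hu]

/-- Performance guarantee for Protocol 3a: the Aggregating Algorithm for CRPS with
confidence levels `p_{i,t}` has cumulative discounted regret at most `((b-a)/2)·ln N`
against every expert. -/
theorem aa_crps_confidence_regret_bound (a b : ℝ) (hab : a < b) (N T : ℕ)
    (hN : 1 ≤ N) (hT : 1 ≤ T)
    (Fe : Fin N → ℕ → ℝ → ℝ) (hFe : ∀ i t, DistFunc a b (Fe i t))
    (p : Fin N → ℕ → ℝ) (hp : ∀ i t, p i t ∈ Set.Icc (0 : ℝ) 1)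
    (y : ℕ → ℝ) (hy : ∀ t, y t ∈ Set.Icc a b)
    (w : Fin N → ℕ → ℝ)
    (hw1 : ∀ i, w i 1 = 1 / N)
    (hpos : ∀ t, 1 ≤ t → t ≤ T → 0 < ∑ j, p j t * w j t)
    (G : ℕ → ℝ → ℝ)
    (hG : ∀ t, ∀ u ∈ Set.Icc a b, G t u = 1 / 2 - (1 / 4) * Real.log
      ((∑ i, (p i t * w i t / ∑ j, p j t * w j t) * Real.exp (-2 * (Fe i t u) ^ 2)) /
        (∑ i, (p i t * w i t / ∑ j, p j t * w j t) *
          Real.exp (-2 * (1 - Fe i t u) ^ 2))))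
    (hwrec : ∀ i, ∀ t, 1 ≤ t →
      w i (t + 1) = w i t * Real.exp (-(2 / (b - a)) *
        (p i t * CRPS a b (Fe i t) (y t) + (1 - p i t) * CRPS a b (G t) (y t)))) :
    ∀ i, ∑ t ∈ Finset.Icc 1 T,
        p i t * (CRPS a b (G t) (y t) - CRPS a b (Fe i t) (y t)) ≤
      ((b - a) / 2) * Real.log N := by
  have hba : 0 < b - a := by linarith
  have hNR : (0:ℝ) < N := by exact_mod_cast hN
  set η : ℝ := 2 / (b - a) with hηdef
  have hη : 0 < η := by positivity
  set ℓG : ℕ → ℝ := fun t => CRPS a b (G t) (y t) with hℓGdef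
  set ℓe : Fin N → ℕ → ℝ := fun i t => CRPS a b (Fe i t) (y t) with hℓedef
  -- positivity of weights
  have hwpos : ∀ t, 1 ≤ t → ∀ i, 0 < w i t := by
    intro t ht
    induction t, ht using Nat.le_induction with
    | base => intro i; rw [hw1]; positivity
    | succ t ht ih =>
      intro i
      rw [hwrec i t ht]
      exact mul_pos (ih i) (Real.exp_pos _)
  -- mixability at each step
  have hmix : ∀ t, 1 ≤ t → t ≤ T →
      ℓG t ≤ -((b - a) / 2) * Real.log
        (∑ i, (p i t * w i t / ∑ j, p j t * w j t) * Real.exp (-η * ℓe i t)) := by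
    intro t h1 h2
    set P := ∑ j, p j t * w j t with hPdef
    have hP : 0 < P := hpos t h1 h2
    set q : Fin N → ℝ := fun i => p i t * w i t / P with hqdef
    have hq0 : ∀ i, 0 ≤ q i := fun i =>
      div_nonneg (mul_nonneg (hp i t).1 (hwpos t h1 i).le) hP.le
    have hq1 : ∑ i, q i = 1 := by
      rw [hqdef]
      dsimp only
      rw [← Finset.sum_div, ← hPdef, div_self hP.ne']
    set f : Fin N → ℝ → ℝ := fun i => clampF a b (Fe i t) with hfdef
    have hfm : ∀ i, Measurable (f i) := fun i =>
      (clampF_monotone hab.le (hFe i t)).measurable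
    have hfb : ∀ i u, f i u ∈ Icc (0:ℝ) 1 := fun i u => clampF_mem hab.le (hFe i t) u
    have hGh : ∀ u ∈ Icc a b, G t u = 1 / 2 - (1 / 4) * Real.log
        ((∑ i, q i * Real.exp (-2 * (f i u) ^ 2)) /
          (∑ i, q i * Real.exp (-2 * (1 - f i u) ^ 2))) := by
      intro u hu
      rw [hG t u hu]
      have e1 : (∑ i, (p i t * w i t / ∑ j, p j t * w j t) * Real.exp (-2 * (Fe i t u) ^ 2)) =
          ∑ i, q i * Real.exp (-2 * (f i u) ^ 2) := by
        refine Finset.sum_congr rfl fun i _ => ?_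
        simp only [hqdef, hfdef, hPdef, clampF_eq u hu]
      have e2 : (∑ i, (p i t * w i t / ∑ j, p j t * w j t) * Real.exp (-2 * (1 - Fe i t u) ^ 2)) =
          ∑ i, q i * Real.exp (-2 * (1 - f i u) ^ 2) := by
        refine Finset.sum_congr rfl fun i _ => ?_
        simp only [hqdef, hfdef, hPdef, clampF_eq u hu]
      rw [e1, e2]
    have := mixability_CRPS a b hab q hq0 hq1 f hfm hfb (y t) (G t) hGh
    have hCR : ∀ i, CRPS a b (f i) (y t) = ℓe i t := by
      intro i
      rw [hℓedef]
      exact CRPS_congr hab.le (fun u hu => clampF_eq u hu) (y t)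
    rw [hℓGdef]
    dsimp only
    calc CRPS a b (G t) (y t)
        ≤ -((b - a) / 2) * Real.log (∑ i, q i * Real.exp (-η * CRPS a b (f i) (y t))) := this
    _ = -((b - a) / 2) * Real.log (∑ i, (p i t * w i t / P) * Real.exp (-η * ℓe i t)) := by
        congr 1
        apply congrArg
        exact Finset.sum_congr rfl fun i _ => by rw [hCR i]
  have hk : η * ((b - a) / 2) = 1 := by rw [hηdef]; field_simp
  -- one-step potential decrease
  have hstep : ∀ t, 1 ≤ t → t ≤ T →
      (∑ i, w i (t + 1)) ≤ Real.exp (-η * ℓG t) * ∑ i, w i t := by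
    intro t h1 h2
    have hP : 0 < ∑ j, p j t * w j t := hpos t h1 h2
    have hmixt := hmix t h1 h2
    have hZpos : 0 < ∑ i, (p i t * w i t / ∑ j, p j t * w j t) * Real.exp (-η * ℓe i t) := by
      have hex : ∃ i ∈ Finset.univ, 0 < p i t * w i t := by
        by_contra hcon
        push_neg at hcon
        exact absurd (Finset.sum_nonpos fun i hi => hcon i hi) (not_le.2 hP)
      obtain ⟨i0, hi0, hpos0⟩ := hex
      apply Finset.sum_pos' (fun i _ => mul_nonneg (div_nonneg
        (mul_nonneg (hp i t).1 (hwpos t h1 i).le) hP.le) (Real.exp_pos _).le)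
      exact ⟨i0, hi0, mul_pos (div_pos hpos0 hP) (Real.exp_pos _)⟩
    have hexp : (∑ i, (p i t * w i t / ∑ j, p j t * w j t) * Real.exp (-η * ℓe i t)) ≤
        Real.exp (-η * ℓG t) := by
      have hlog : Real.log (∑ i, (p i t * w i t / ∑ j, p j t * w j t) *
          Real.exp (-η * ℓe i t)) ≤ -η * ℓG t := by
        set L := Real.log (∑ i, (p i t * w i t / ∑ j, p j t * w j t) *
          Real.exp (-η * ℓe i t)) with hLdef
        have h2' : η * ℓG t ≤ η * (-((b - a) / 2) * L) :=
          mul_le_mul_of_nonneg_left hmixt hη.le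
        have h3' : η * (-((b - a) / 2) * L) = -L := by
          have : η * (-((b - a) / 2) * L) = -(η * ((b - a) / 2)) * L := by ring
          rw [this, hk]; ring
        rw [h3'] at h2'
        linarith
      calc (∑ i, (p i t * w i t / ∑ j, p j t * w j t) * Real.exp (-η * ℓe i t))
          = Real.exp (Real.log (∑ i, (p i t * w i t / ∑ j, p j t * w j t) *
              Real.exp (-η * ℓe i t))) := (Real.exp_log hZpos).symm
      _ ≤ Real.exp (-η * ℓG t) := Real.exp_le_exp.2 hlog
    calc (∑ i, w i (t + 1))
        = ∑ i, w i t * Real.exp (-η * (p i t * ℓe i t + (1 - p i t) * ℓG t)) :=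
          Finset.sum_congr rfl fun i _ => hwrec i t h1
    _ ≤ ∑ i, w i t * (p i t * Real.exp (-η * ℓe i t) +
          (1 - p i t) * Real.exp (-η * ℓG t)) := by
        apply Finset.sum_le_sum
        intro i _
        apply mul_le_mul_of_nonneg_left ?_ (hwpos t h1 i).le
        have hp2 : (0:ℝ) ≤ 1 - p i t := by linarith [(hp i t).2]
        have hp3 : p i t + (1 - p i t) = 1 := by ring
        have hcvx := convexOn_exp.2 (Set.mem_univ (-η * ℓe i t)) (Set.mem_univ (-η * ℓG t))
          (hp i t).1 hp2 hp3
        have harg : p i t • (-η * ℓe i t) + (1 - p i t) • (-η * ℓG t) =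
            -η * (p i t * ℓe i t + (1 - p i t) * ℓG t) := by
          simp only [smul_eq_mul]
          ring
        rw [harg] at hcvx
        simpa [smul_eq_mul] using hcvx
    _ = (∑ i, p i t * w i t * Real.exp (-η * ℓe i t)) +
          (∑ i, (1 - p i t) * w i t) * Real.exp (-η * ℓG t) := by
        rw [Finset.sum_mul, ← Finset.sum_add_distrib]
        exact Finset.sum_congr rfl fun i _ => by ring
    _ ≤ (∑ j, p j t * w j t) * Real.exp (-η * ℓG t) +
          (∑ i, (1 - p i t) * w i t) * Real.exp (-η * ℓG t) := by
        have he : (∑ i, p i t * w i t * Real.exp (-η * ℓe i t)) =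
            (∑ j, p j t * w j t) *
              ∑ i, (p i t * w i t / ∑ j, p j t * w j t) * Real.exp (-η * ℓe i t) := by
          rw [Finset.mul_sum]
          refine Finset.sum_congr rfl fun i _ => ?_
          field_simp
        rw [he]
        exact add_le_add_left (mul_le_mul_of_nonneg_left hexp hP.le) _
    _ = Real.exp (-η * ℓG t) * ∑ i, w i t := by
        have hsum : (∑ j, p j t * w j t) + (∑ i, (1 - p i t) * w i t) = ∑ i, w i t := by
          rw [← Finset.sum_add_distrib]
          exact Finset.sum_congr rfl fun i _ => by ring
        calc (∑ j, p j t * w j t) * Real.exp (-η * ℓG t) +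
              (∑ i, (1 - p i t) * w i t) * Real.exp (-η * ℓG t)
            = ((∑ j, p j t * w j t) + ∑ i, (1 - p i t) * w i t) * Real.exp (-η * ℓG t) := by
              ring
        _ = _ := by rw [hsum, mul_comm]
  -- potential over time
  have hW1 : (∑ i, w i 1) = 1 := by
    calc (∑ i, w i 1) = ∑ _i : Fin N, (1 / N : ℝ) :=
          Finset.sum_congr rfl fun i _ => hw1 i
    _ = 1 := by
        rw [Finset.sum_const, Finset.card_univ, Fintype.card_fin, nsmul_eq_mul]
        field_simp
  have hWT : ∀ t, t ≤ T → (∑ i, w i (t + 1)) ≤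
      Real.exp (-η * ∑ s ∈ Finset.Icc 1 t, ℓG s) := by
    intro t
    induction t with
    | zero =>
      intro _
      rw [show Finset.Icc 1 0 = ∅ from Finset.Icc_eq_empty (by omega)]
      simp [hW1]
    | succ t ih =>
      intro h
      calc (∑ i, w i (t + 1 + 1)) ≤ Real.exp (-η * ℓG (t + 1)) * ∑ i, w i (t + 1) :=
            hstep (t + 1) (by omega) h
      _ ≤ Real.exp (-η * ℓG (t + 1)) * Real.exp (-η * ∑ s ∈ Finset.Icc 1 t, ℓG s) :=
            mul_le_mul_of_nonneg_left (ih (by omega)) (Real.exp_pos _).le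
      _ = Real.exp (-η * ∑ s ∈ Finset.Icc 1 (t + 1), ℓG s) := by
            rw [← Real.exp_add, Finset.sum_Icc_succ_top (by omega : 1 ≤ t + 1)]
            congr 1
            ring
  -- weight formula
  have hwf : ∀ i t, w i (t + 1) = (1 / N : ℝ) *
      Real.exp (-η * ∑ s ∈ Finset.Icc 1 t, (p i s * ℓe i s + (1 - p i s) * ℓG s)) := by
    intro i t
    induction t with
    | zero =>
      rw [show Finset.Icc 1 0 = ∅ from Finset.Icc_eq_empty (by omega)]
      simp [hw1]
    | succ t ih =>
      rw [hwrec i (t + 1) (by omega), ih, Finset.sum_Icc_succ_top (by omega : 1 ≤ t + 1),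
        mul_assoc, ← Real.exp_add]
      congr 2
      ring
  -- conclusion
  intro i0
  have hle : w i0 (T + 1) ≤ ∑ i, w i (T + 1) :=
    Finset.single_le_sum (fun i _ => (hwpos (T + 1) (by omega) i).le)
      (Finset.mem_univ i0)
  have key : (1 / N : ℝ) *
      Real.exp (-η * ∑ s ∈ Finset.Icc 1 T, (p i0 s * ℓe i0 s + (1 - p i0 s) * ℓG s)) ≤
      Real.exp (-η * ∑ s ∈ Finset.Icc 1 T, ℓG s) := by
    rw [← hwf i0 T]
    exact le_trans hle (hWT T le_rfl)
  have hlogkey : Real.log (1 / N : ℝ) +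
      (-η * ∑ s ∈ Finset.Icc 1 T, (p i0 s * ℓe i0 s + (1 - p i0 s) * ℓG s)) ≤
      -η * ∑ s ∈ Finset.Icc 1 T, ℓG s := by
    have hl : (1 / N : ℝ) *
        Real.exp (-η * ∑ s ∈ Finset.Icc 1 T, (p i0 s * ℓe i0 s + (1 - p i0 s) * ℓG s)) =
        Real.exp (Real.log (1 / N : ℝ) +
          (-η * ∑ s ∈ Finset.Icc 1 T, (p i0 s * ℓe i0 s + (1 - p i0 s) * ℓG s))) := by
      rw [Real.exp_add, Real.exp_log (by positivity)]
    rw [hl] at key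
    exact Real.exp_le_exp.1 key
  have hlogN : Real.log (1 / N : ℝ) = -Real.log N := by
    rw [one_div, Real.log_inv]
  have hsplit : (∑ s ∈ Finset.Icc 1 T, (p i0 s * ℓe i0 s + (1 - p i0 s) * ℓG s)) =
      (∑ s ∈ Finset.Icc 1 T, ℓG s) -
        ∑ s ∈ Finset.Icc 1 T, p i0 s * (ℓG s - ℓe i0 s) := by
    rw [← Finset.sum_sub_distrib]
    exact Finset.sum_congr rfl fun s _ => by ring
  rw [hlogN, hsplit] at hlogkey
  have hmain : η * (∑ s ∈ Finset.Icc 1 T, p i0 s * (ℓG s - ℓe i0 s)) ≤ Real.log N := by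
    nlinarith [hlogkey]
  have hgoal : (∑ t ∈ Finset.Icc 1 T,
      p i0 t * (CRPS a b (G t) (y t) - CRPS a b (Fe i0 t) (y t))) =
      ∑ s ∈ Finset.Icc 1 T, p i0 s * (ℓG s - ℓe i0 s) := rfl
  rw [hgoal]
  have h5 := mul_le_mul_of_nonneg_left hmain (by linarith : (0:ℝ) ≤ (b - a) / 2)
  have h6 : (b - a) / 2 * (η * (∑ s ∈ Finset.Icc 1 T, p i0 s * (ℓG s - ℓe i0 s))) =
      ∑ s ∈ Finset.Icc 1 T, p i0 s * (ℓG s - ℓe i0 s) := by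
    rw [show (b - a) / 2 * (η * (∑ s ∈ Finset.Icc 1 T, p i0 s * (ℓG s - ℓe i0 s))) =
      (η * ((b - a) / 2)) * (∑ s ∈ Finset.Icc 1 T, p i0 s * (ℓG s - ℓe i0 s)) by ring, hk,
      one_mul]
  linarith
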